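/- arXiv:2108.03369 — 2 statements merged into one kernel-verified Lean document; each statement's English description precedes it below -/
import Mathlib

section
/- Let P be an LPOD. Then a four-valued interpretation M is a three-valued answer set of P if and only if M is a consistent ⪯-minimal four-valued model of P and M is solid (assigns T* to no literal). -/
/-! Four truth values F < F* < T* < T. -/
inductive V4 : Type
  | F | Fs | Ts | T
  deriving DecidableEq, Repr

instance : Fintype V4 :=
  ⟨{V4.F, V4.Fs, V4.Ts, V4.T}, fun x => by cases x <;> simp⟩

namespace V4

def toNat : V4 → ℕ
  | F => 0
  | Fs => 1
  | Ts => 2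
  | T => 3

theorem toNat_injective : Function.Injective toNat := by
  intro a b h
  cases a <;> cases b <;> simp_all [toNat]

instance : LinearOrder V4 := LinearOrder.lift' toNat toNat_injective

instance : BoundedOrder V4 where
  top := T
  le_top a := by cases a <;> decide
  bot := F
  bot_le a := by cases a <;> decide

/-- Negation-as-failure: `not φ` is `T` if `φ ≤ F*`, else `F`. -/
def notv (a : V4) : V4 := if a ≤ Fs then T else F

/-- Ordered disjunction on truth values: `u × v = v` if `u = F*`, else `u`. -/
def times (a b : V4) : V4 := if a = Fs then b else a

end V4

variable {α : Type}

/-- A ground literal: an atom together with a polarity (`true` = the atom itself,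
`false` = its strong negation). -/
structure Lit (α : Type) where
  atom : α
  positive : Bool
  deriving DecidableEq

/-- A (four-valued) interpretation assigns a truth value to every literal.
Three-valued interpretations are the `solid` ones (no `T*` value). -/
abbrev Interp (α : Type) := Lit α → V4

/-- `I` is solid (equivalently, three-valued) if it assigns `T*` to no literal. -/
def solid (I : Interp α) : Prop := ∀ l, I l ≠ V4.Ts

/-- `I` is consistent: no atom has both the atom and its strong negation `T`. -/
def consistentI (I : Interp α) : Prop :=
  ∀ a : α, ¬ (I ⟨a, true⟩ = V4.T ∧ I ⟨a, false⟩ = V4.T)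

/-- `I` takes values only in `{F, T}`. -/
def twoValued (I : Interp α) : Prop := ∀ l, I l = V4.F ∨ I l = V4.T

/-- Value of the conjunction of a list of literals. -/
def evalConj (I : Interp α) (L : List (Lit α)) : V4 := (L.map I).foldr min V4.T

/-- Value of the conjunction `not B1 ∧ ⋯ ∧ not Bk`. -/
def evalNegs (I : Interp α) (L : List (Lit α)) : V4 :=
  (L.map (fun b => V4.notv (I b))).foldr min V4.T

/-- Value of the disjunction of a list of literals. -/
def evalDisj (I : Interp α) (L : List (Lit α)) : V4 := (L.map I).foldr max V4.F

/-- Value of an ordered disjunction of the given (nonempty) list of values.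
(`F*` is a right identity for `×`, so the fold computes `v1 × ⋯ × vn`.) -/
def evalOD (vs : List V4) : V4 := vs.foldr V4.times V4.Fs

/-- Pointwise `≤` on interpretations. -/
def interpLE (I J : Interp α) : Prop := ∀ l, I l ≤ J l

/-- The four-valued relation `⪯`: `u ⪯ v` iff `u = v` or `u ≺ v`, where
`F ≺ F*`, `F ≺ T*`, `F ≺ T` and `T* ≺ T`.  On three-valued (solid)
interpretations it restricts to the ordering generated by `F ≺ F*`, `F ≺ T`. -/
def preceq (u v : V4) : Prop :=
  u = v ∨ (u = V4.F ∧ v ≠ V4.F) ∨ (u = V4.Ts ∧ v = V4.T)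

/-- Pointwise `⪯` on interpretations. -/
def interpPreceq (I J : Interp α) : Prop := ∀ l, preceq (I l) (J l)

/-- The set of literals that are `T` in `I`. -/
def collapse (I : Interp α) : Set (Lit α) := { l | I l = V4.T }

/-! ### LPOD rules -/

/-- An LPOD rule `C1 × ⋯ × Cn ← A1,…,Am, not B1,…,not Bk` with head
`c1 :: cs` (so the head is nonempty). -/
structure Rule (α : Type) where
  c1 : Lit α
  cs : List (Lit α)
  pos : List (Lit α)
  neg : List (Lit α)

def Rule.headList (R : Rule α) : List (Lit α) := R.c1 :: R.cs

def Rule.headVal (R : Rule α) (I : Interp α) : V4 := evalOD (R.headList.map I)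

def Rule.bodyVal (R : Rule α) (I : Interp α) : V4 :=
  min (evalConj I R.pos) (evalNegs I R.neg)

/-- `I` satisfies the rule `R` (the rule evaluates to `T`). -/
def ruleSat (I : Interp α) (R : Rule α) : Prop := R.bodyVal I ≤ R.headVal I

/-- `I` is a model of the LPOD `P`. -/
def isModel (I : Interp α) (P : Set (Rule α)) : Prop := ∀ R ∈ P, ruleSat I R

/-! ### The ×-reduct of an LPOD -/

/-- A reduct rule `C ← [F*,] A1,…,Am`; `fstar` records whether the constant `F*`
occurs in the body. -/
structure RedRule (α : Type) where
  head : Lit α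
  pos : List (Lit α)
  fstar : Bool

def RedRule.bodyVal (r : RedRule α) (I : Interp α) : V4 :=
  min (if r.fstar then V4.Fs else V4.T) (evalConj I r.pos)

def redSat (I : Interp α) (r : RedRule α) : Prop := r.bodyVal I ≤ I r.head

def redModel (I : Interp α) (Q : Set (RedRule α)) : Prop := ∀ r ∈ Q, redSat I r

/-- Reduct rules generated by a head `C1,…,Cn`: rules `Cj ← F*, body` for
`j < r` and `Cr ← body`, where `r` is the least index with
`I C1 = ⋯ = I C_{r-1} = F*` and (`r = n` or `I Cr ≠ F*`). -/
def xredHead (I : Interp α) (body : List (Lit α)) : List (Lit α) → List (RedRule α)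
  | [] => []
  | [c] => [⟨c, body, false⟩]
  | c :: c' :: rest =>
    if I c = V4.Fs then ⟨c, body, true⟩ :: xredHead I body (c' :: rest)
    else [⟨c, body, false⟩]

/-- The ×-reduct of a rule w.r.t. `I`. -/
def xredRule (I : Interp α) (R : Rule α) : List (RedRule α) :=
  if ∃ b ∈ R.neg, I b = V4.T then [] else xredHead I R.pos R.headList

/-- The ×-reduct of an LPOD w.r.t. `I`. -/
def xreduct (I : Interp α) (P : Set (Rule α)) : Set (RedRule α) :=
  { r | ∃ R ∈ P, r ∈ xredRule I R }

/-- `M` is a three-valued answer set of the LPOD `P`: a consistent three-valued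
interpretation that is the `≤`-least (three-valued) model of `P^M_×`. -/
def threeAnswerSet (P : Set (Rule α)) (M : Interp α) : Prop :=
  solid M ∧ consistentI M ∧ redModel M (xreduct M P) ∧
  ∀ N : Interp α, solid N → redModel N (xreduct M P) → interpLE M N

/-! ### Two-valued notions: Brewka answer sets and GL answer sets -/

/-- A set of literals is consistent if it contains no complementary pair. -/
def twoConsistent (N : Set (Lit α)) : Prop :=
  ∀ a : α, ¬ (Lit.mk a true ∈ N ∧ Lit.mk a false ∈ N)

/-- `N` is a (two-valued) Brewka-model of the LPOD `P`. -/
def brewkaModel (N : Set (Lit α)) (P : Set (Rule α)) : Prop :=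
  ∀ R ∈ P, (∀ a ∈ R.pos, a ∈ N) → (∀ b ∈ R.neg, b ∉ N) → ∃ c ∈ R.headList, c ∈ N

/-- A positive rule `C ← A1,…,Am`. -/
structure PosRule (α : Type) where
  head : Lit α
  pos : List (Lit α)

/-- `N` is a two-valued model of a positive program. -/
def posModel (N : Set (Lit α)) (Q : Set (PosRule α)) : Prop :=
  ∀ r ∈ Q, (∀ a ∈ r.pos, a ∈ N) → r.head ∈ N

/-- The Brewka ×-reduct of an LPOD w.r.t. a set of literals `N`:
`Ci ← A1,…,Am` whenever `Ci ∈ N` and `N ∩ {C1,…,C_{i-1},B1,…,Bk} = ∅`. -/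
def brewkaReduct (N : Set (Lit α)) (P : Set (Rule α)) : Set (PosRule α) :=
  { r | ∃ R ∈ P, ∃ l1 l2 : List (Lit α),
      R.headList = l1 ++ r.head :: l2 ∧ r.pos = R.pos ∧ r.head ∈ N ∧
      (∀ c ∈ l1, c ∉ N) ∧ (∀ b ∈ R.neg, b ∉ N) }

/-- `N` is a Brewka answer set of the LPOD `P`. -/
def brewkaAnswerSet (P : Set (Rule α)) (N : Set (Lit α)) : Prop :=
  twoConsistent N ∧ brewkaModel N P ∧ posModel N (brewkaReduct N P) ∧
  ∀ N', posModel N' (brewkaReduct N P) → N ⊆ N'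

/-- The Gelfond–Lifschitz reduct of an extended logic program (an LPOD all
of whose rule heads are single literals) w.r.t. a set of literals `N`. -/
def glReduct (P : Set (Rule α)) (N : Set (Lit α)) : Set (PosRule α) :=
  { r | ∃ R ∈ P, (∀ b ∈ R.neg, b ∉ N) ∧ r.head = R.c1 ∧ r.pos = R.pos }

/-- `N` is a standard answer set of the extended logic program `P`: a consistent
set of literals that is the least model of `P^N`. -/
def stdAnswerSet (P : Set (Rule α)) (N : Set (Lit α)) : Prop :=
  twoConsistent N ∧ posModel N (glReduct P N) ∧
  ∀ N', posModel N' (glReduct P N) → N ⊆ N'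

/-! ### DLPODs -/

/-- A DLPOD rule `𝒞1 × ⋯ × 𝒞n ← A1,…,Am, not B1,…,not Bk`, where each `𝒞i`
is a disjunction of literals; the head is `c1 :: cs` (nonempty). -/
structure DRule (α : Type) where
  c1 : List (Lit α)
  cs : List (List (Lit α))
  pos : List (Lit α)
  neg : List (Lit α)

def DRule.headList (R : DRule α) : List (List (Lit α)) := R.c1 :: R.cs

def DRule.headVal (R : DRule α) (I : Interp α) : V4 :=
  evalOD (R.headList.map (evalDisj I))

def DRule.bodyVal (R : DRule α) (I : Interp α) : V4 :=
  min (evalConj I R.pos) (evalNegs I R.neg)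

def dRuleSat (I : Interp α) (R : DRule α) : Prop := R.bodyVal I ≤ R.headVal I

def isDModel (I : Interp α) (P : Set (DRule α)) : Prop := ∀ R ∈ P, dRuleSat I R

/-- A disjunctive reduct rule `𝒞 ← [F*,] A1,…,Am`. -/
structure DRedRule (α : Type) where
  head : List (Lit α)
  pos : List (Lit α)
  fstar : Bool

def DRedRule.bodyVal (r : DRedRule α) (I : Interp α) : V4 :=
  min (if r.fstar then V4.Fs else V4.T) (evalConj I r.pos)

def dredSat (I : Interp α) (r : DRedRule α) : Prop := r.bodyVal I ≤ evalDisj I r.head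

def dredModel (I : Interp α) (Q : Set (DRedRule α)) : Prop := ∀ r ∈ Q, dredSat I r

def dxredHead (I : Interp α) (body : List (Lit α)) :
    List (List (Lit α)) → List (DRedRule α)
  | [] => []
  | [c] => [⟨c, body, false⟩]
  | c :: c' :: rest =>
    if evalDisj I c = V4.Fs then ⟨c, body, true⟩ :: dxredHead I body (c' :: rest)
    else [⟨c, body, false⟩]

/-- The ×-reduct of a DLPOD rule w.r.t. `I`. -/
def dxredRule (I : Interp α) (R : DRule α) : List (DRedRule α) :=
  if ∃ b ∈ R.neg, I b = V4.T then [] else dxredHead I R.pos R.headList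

/-- The ×-reduct of a DLPOD w.r.t. `I`. -/
def dxreduct (I : Interp α) (P : Set (DRule α)) : Set (DRedRule α) :=
  { r | ∃ R ∈ P, r ∈ dxredRule I R }

/-- `M` is an answer set of the DLPOD `P`: a consistent three-valued
interpretation that is a `≤`-minimal (three-valued) model of `P^M_×`. -/
def dAnswerSet (P : Set (DRule α)) (M : Interp α) : Prop :=
  solid M ∧ consistentI M ∧ dredModel M (dxreduct M P) ∧
  ∀ N : Interp α, solid N → dredModel N (dxreduct M P) → interpLE N M → N = M

/-- A positive disjunctive rule `C1 ∨ ⋯ ∨ Cq ← A1,…,Am`. -/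
structure DPosRule (α : Type) where
  head : List (Lit α)
  pos : List (Lit α)

/-- `N` is a two-valued model of a positive disjunctive program. -/
def dposModel (N : Set (Lit α)) (Q : Set (DPosRule α)) : Prop :=
  ∀ r ∈ Q, (∀ a ∈ r.pos, a ∈ N) → ∃ c ∈ r.head, c ∈ N

/-- The Gelfond–Lifschitz reduct of a disjunctive extended logic program (a
DLPOD all of whose rule heads are single disjunctions). -/
def glDReduct (P : Set (DRule α)) (N : Set (Lit α)) : Set (DPosRule α) :=
  { r | ∃ R ∈ P, (∀ b ∈ R.neg, b ∉ N) ∧ r.head = R.c1 ∧ r.pos = R.pos }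

/-- `N` is a standard disjunctive answer set: a consistent set of literals that
is a minimal two-valued model of `P^N`. -/
def stdDAnswerSet (P : Set (DRule α)) (N : Set (Lit α)) : Prop :=
  twoConsistent N ∧ dposModel N (glDReduct P N) ∧
  ∀ N', dposModel N' (glDReduct P N) → N' ⊆ N → N' = N

section Aux
variable {α : Type}

-- V4 decidable facts
lemma v4_le_T (a : V4) : a ≤ V4.T := by revert a; decide
lemma v4_F_le (a : V4) : V4.F ≤ a := by revert a; decide
lemma v4_ne_le (a : V4) : a ≠ V4.T → a ≠ V4.Ts → a ≤ V4.Fs := by revert a; decide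
lemma v4_le_Fs_ne (a : V4) : a ≤ V4.Fs → a ≠ V4.Fs → a = V4.F := by revert a; decide
lemma v4_not_le_Ts (a : V4) : ¬ a ≤ V4.Ts → a = V4.T := by revert a; decide
lemma v4_ne_F (a : V4) : a ≠ V4.F → V4.Fs ≤ a := by revert a; decide
lemma v4_le_F (a : V4) : a ≤ V4.F → a = V4.F := by revert a; decide
lemma v4_le_Ts_ne (a : V4) : a ≤ V4.Ts → a ≠ V4.Ts → a ≤ V4.Fs := by revert a; decide
lemma v4_Fs_ne_T : V4.Fs ≠ V4.T := by decide
lemma v4_T_ne_Fs : V4.T ≠ V4.Fs := by decide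

lemma preceq_le : ∀ u v : V4, preceq u v → u ≤ v := by unfold preceq; decide
lemma preceq_Ts : ∀ u v : V4, preceq u v → u = V4.Ts → v ≠ V4.Ts → v = V4.T := by unfold preceq; decide
lemma preceq_Fs : ∀ u v : V4, preceq u v → u = V4.Fs → v = V4.Fs := by unfold preceq; decide
lemma preceq_refl (u : V4) : preceq u u := Or.inl rfl
lemma preceq_Ts_T : preceq V4.Ts V4.T := by unfold preceq; decide
lemma preceq_F (u : V4) : preceq V4.F u := by revert u; unfold preceq; decide

lemma notv_T {u : V4} (h : u ≤ V4.Fs) : V4.notv u = V4.T := if_pos h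
lemma notv_F {u : V4} (h : ¬ u ≤ V4.Fs) : V4.notv u = V4.F := if_neg h

-- evalConj
lemma evalConj_nil (I : Interp α) : evalConj I [] = V4.T := rfl
lemma evalConj_cons (I : Interp α) (a : Lit α) (L : List (Lit α)) :
    evalConj I (a :: L) = min (I a) (evalConj I L) := rfl

lemma evalConj_le_of_mem (I : Interp α) {L : List (Lit α)} {a : Lit α} (h : a ∈ L) :
    evalConj I L ≤ I a := by
  induction L with
  | nil => simp at h
  | cons x L ih =>
    rw [evalConj_cons]
    rcases List.mem_cons.1 h with h | h
    · subst h; exact min_le_left _ _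
    · exact le_trans (min_le_right _ _) (ih h)

lemma le_evalConj {I : Interp α} {L : List (Lit α)} {v : V4} (h : ∀ a ∈ L, v ≤ I a) :
    v ≤ evalConj I L := by
  induction L with
  | nil => exact v4_le_T v
  | cons x L ih =>
    rw [evalConj_cons]
    exact le_min (h x (by simp)) (ih fun a ha => h a (by simp [ha]))

lemma evalConj_mono {I J : Interp α} {L : List (Lit α)} (h : ∀ a ∈ L, I a ≤ J a) :
    evalConj I L ≤ evalConj J L :=
  le_evalConj fun a ha => le_trans (evalConj_le_of_mem I ha) (h a ha)

lemma exists_le_of_evalConj_le {I : Interp α} {L : List (Lit α)} {v : V4} (hv : v ≠ V4.T)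
    (h : evalConj I L ≤ v) : ∃ a ∈ L, I a ≤ v := by
  induction L with
  | nil => exact absurd (le_antisymm (v4_le_T v) h) hv
  | cons x L ih =>
    rw [evalConj_cons] at h
    rcases min_le_iff.1 h with h | h
    · exact ⟨x, by simp, h⟩
    · obtain ⟨a, ha, hle⟩ := ih h
      exact ⟨a, by simp [ha], hle⟩

-- evalNegs
lemma evalNegs_cons (I : Interp α) (b : Lit α) (L : List (Lit α)) :
    evalNegs I (b :: L) = min (V4.notv (I b)) (evalNegs I L) := rfl

lemma evalNegs_eq_T {I : Interp α} {L : List (Lit α)} (h : ∀ b ∈ L, I b ≤ V4.Fs) :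
    evalNegs I L = V4.T := by
  induction L with
  | nil => rfl
  | cons x L ih =>
    rw [evalNegs_cons, notv_T (h x (by simp)), ih fun b hb => h b (by simp [hb])]
    exact min_self _

lemma evalNegs_le_notv {I : Interp α} {L : List (Lit α)} {b : Lit α} (h : b ∈ L) :
    evalNegs I L ≤ V4.notv (I b) := by
  induction L with
  | nil => simp at h
  | cons x L ih =>
    rw [evalNegs_cons]
    rcases List.mem_cons.1 h with h | h
    · subst h; exact min_le_left _ _
    · exact le_trans (min_le_right _ _) (ih h)

-- evalOD
lemma evalOD_nil : evalOD [] = V4.Fs := rfl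
lemma evalOD_cons (v : V4) (vs : List V4) :
    evalOD (v :: vs) = if v = V4.Fs then evalOD vs else v := rfl

lemma evalOD_prefix {I : Interp α} {l1 : List (Lit α)} (rest : List (Lit α))
    (h : ∀ x ∈ l1, I x = V4.Fs) :
    evalOD ((l1 ++ rest).map I) = evalOD (rest.map I) := by
  induction l1 with
  | nil => rfl
  | cons x l1 ih =>
    rw [List.cons_append, List.map_cons, evalOD_cons, if_pos (h x (by simp))]
    exact ih fun y hy => h y (by simp [hy])

lemma evalOD_split {I : Interp α} {l1 : List (Lit α)} (c : Lit α) (l2 : List (Lit α))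
    (h : ∀ x ∈ l1, I x = V4.Fs) :
    evalOD ((l1 ++ c :: l2).map I) = if I c = V4.Fs then evalOD (l2.map I) else I c := by
  rw [evalOD_prefix _ h, List.map_cons, evalOD_cons]

end Aux
section Aux2
variable {α : Type}

lemma xred_decomp (M : Interp α) (pos : List (Lit α)) :
    ∀ hs : List (Lit α), hs ≠ [] →
    ∃ l1 c l2, hs = l1 ++ c :: l2 ∧ (∀ x ∈ l1, M x = V4.Fs) ∧
      xredHead M pos hs = l1.map (fun x => (⟨x, pos, true⟩ : RedRule α)) ++ [⟨c, pos, false⟩] ∧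
      (M c = V4.Fs → l2 = []) := by
  intro hs
  induction hs with
  | nil => simp
  | cons c rest ih =>
    intro _
    cases rest with
    | nil =>
      exact ⟨[], c, [], rfl, by simp, by simp [xredHead], fun _ => rfl⟩
    | cons c' rest' =>
      by_cases h : M c = V4.Fs
      · obtain ⟨l1, d, l2, heq, hfs, hred, hl2⟩ := ih (by simp)
        refine ⟨c :: l1, d, l2, by simp [heq], ?_, ?_, hl2⟩
        · intro x hx
          rcases List.mem_cons.1 hx with rfl | hx
          · exact h
          · exact hfs x hx
        · simp [xredHead, h, hred]
      · exact ⟨[], c, c' :: rest', rfl, by simp, by simp [xredHead, h], fun hc => absurd hc h⟩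

lemma exists_split (f : Lit α → V4) :
    ∀ L : List (Lit α), (∃ x ∈ L, f x ≠ V4.Fs) →
    ∃ p x q, L = p ++ x :: q ∧ (∀ y ∈ p, f y = V4.Fs) ∧ f x ≠ V4.Fs := by
  intro L
  induction L with
  | nil => rintro ⟨x, hx, -⟩; simp at hx
  | cons a L ih =>
    intro h
    by_cases ha : f a = V4.Fs
    · have h' : ∃ x ∈ L, f x ≠ V4.Fs := by
        obtain ⟨x, hx, hne⟩ := h
        rcases List.mem_cons.1 hx with rfl | hx
        · exact absurd ha hne
        · exact ⟨x, hx, hne⟩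
      obtain ⟨p, x, q, heq, hp, hx⟩ := ih h'
      refine ⟨a :: p, x, q, by simp [heq], ?_, hx⟩
      intro y hy
      rcases List.mem_cons.1 hy with rfl | hy
      · exact ha
      · exact hp y hy
    · exact ⟨[], a, L, rfl, by simp, ha⟩

lemma bodyVal_eq_conj {I : Interp α} {R : Rule α} (h : ∀ b ∈ R.neg, I b ≤ V4.Fs) :
    R.bodyVal I = evalConj I R.pos := by
  unfold Rule.bodyVal
  rw [evalNegs_eq_T h]
  exact min_eq_left (v4_le_T _)

lemma ruleSat_of_bigneg {I : Interp α} {R : Rule α} {b : Lit α} (hb : b ∈ R.neg)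
    (h : ¬ I b ≤ V4.Fs) : ruleSat I R := by
  have h1 : R.bodyVal I ≤ V4.F := by
    have := evalNegs_le_notv (I := I) hb
    rw [notv_F h] at this
    exact le_trans (min_le_right _ _) this
  exact le_trans h1 (v4_F_le _)

lemma redSat_false_iff (I : Interp α) (c : Lit α) (pos : List (Lit α)) :
    redSat I ⟨c, pos, false⟩ ↔ evalConj I pos ≤ I c := by
  unfold redSat RedRule.bodyVal
  simp only [Bool.false_eq_true, if_false]
  rw [min_eq_right (v4_le_T _)]

lemma redSat_true_of {I : Interp α} {c : Lit α} {pos : List (Lit α)} (h : V4.Fs ≤ I c) :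
    redSat I ⟨c, pos, true⟩ := by
  unfold redSat RedRule.bodyVal
  simp only [if_true]
  exact le_trans (min_le_left _ _) h

lemma redSat_of_conj_le {I : Interp α} {c : Lit α} {pos : List (Lit α)} {fs : Bool}
    (h : evalConj I pos ≤ I c) : redSat I ⟨c, pos, fs⟩ :=
  le_trans (min_le_right _ _) h

lemma xredRule_eq {I : Interp α} {R : Rule α} (h : ∀ b ∈ R.neg, I b ≠ V4.T) :
    xredRule I R = xredHead I R.pos R.headList := by
  unfold xredRule
  rw [if_neg]
  rintro ⟨b, hb, hbT⟩
  exact h b hb hbT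

/-- `M` solid and a model of the reduct implies `M` models `P`. -/
lemma isModel_of_redModel {M : Interp α} {P : Set (Rule α)} (hsol : solid M)
    (hred : redModel M (xreduct M P)) : isModel M P := by
  intro R hR
  by_cases hneg : ∃ b ∈ R.neg, M b = V4.T
  · obtain ⟨b, hb, hbT⟩ := hneg
    exact ruleSat_of_bigneg hb (by rw [hbT]; decide)
  · push_neg at hneg
    have hnegFs : ∀ b ∈ R.neg, M b ≤ V4.Fs := fun b hb => v4_ne_le _ (hneg b hb) (hsol b)
    obtain ⟨l1, c, l2, heq, hfs, hredl, hl2⟩ :=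
      xred_decomp M R.pos R.headList (List.cons_ne_nil _ _)
    have hmem : (⟨c, R.pos, false⟩ : RedRule α) ∈ xreduct M P :=
      ⟨R, hR, by rw [xredRule_eq hneg, hredl]; simp⟩
    have hc : evalConj M R.pos ≤ M c := (redSat_false_iff M c R.pos).1 (hred _ hmem)
    unfold ruleSat
    rw [bodyVal_eq_conj hnegFs]
    unfold Rule.headVal
    rw [heq, evalOD_split c l2 hfs]
    by_cases hcFs : M c = V4.Fs
    · rw [if_pos hcFs, hl2 hcFs]
      rw [hcFs] at hc
      exact hc
    · rw [if_neg hcFs]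
      exact hc

/-- `M` a solid model of `P` implies `M` models the reduct. -/
lemma redModel_of_isModel {M : Interp α} {P : Set (Rule α)} (hsol : solid M)
    (hmod : isModel M P) : redModel M (xreduct M P) := by
  rintro r ⟨R, hR, hrR⟩
  by_cases hneg : ∃ b ∈ R.neg, M b = V4.T
  · unfold xredRule at hrR
    rw [if_pos hneg] at hrR
    simp at hrR
  · push_neg at hneg
    have hnegFs : ∀ b ∈ R.neg, M b ≤ V4.Fs := fun b hb => v4_ne_le _ (hneg b hb) (hsol b)
    obtain ⟨l1, c, l2, heq, hfs, hredl, hl2⟩ :=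
      xred_decomp M R.pos R.headList (List.cons_ne_nil _ _)
    rw [xredRule_eq hneg, hredl] at hrR
    have hsat := hmod R hR
    unfold ruleSat at hsat
    rw [bodyVal_eq_conj hnegFs] at hsat
    unfold Rule.headVal at hsat
    rw [heq, evalOD_split c l2 hfs] at hsat
    rcases List.mem_append.1 hrR with h | h
    · obtain ⟨x, hx, rfl⟩ := List.mem_map.1 h
      exact redSat_true_of (le_of_eq (hfs x hx).symm)
    · rw [List.mem_singleton.1 h]
      by_cases hcFs : M c = V4.Fs
      · rw [if_pos hcFs] at hsat
        rw [hl2 hcFs] at hsat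
        refine redSat_of_conj_le ?_
        rw [hcFs]
        exact hsat
      · rw [if_neg hcFs] at hsat
        exact redSat_of_conj_le hsat
end Aux2
section Aux3
variable {α : Type}

lemma step1 {M N : Interp α} {P : Set (Rule α)} (hsol : solid M) (hmod : isModel M P)
    (hmin : ∀ K : Interp α, isModel K P → interpPreceq K M → K = M)
    (hN : redModel N (xreduct M P)) : ∀ l, M l = V4.T → N l = V4.T := by
  classical
  set J : Interp α := fun l => if M l = V4.T then (if N l = V4.T then V4.T else V4.Ts) else M l
    with hJdef
  have hJle : ∀ l, J l ≤ M l := by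
    intro l
    by_cases h : M l = V4.T
    · rw [h]; exact v4_le_T _
    · simp only [hJdef, if_neg h]; exact le_refl _
  have hJT : ∀ l, M l = V4.T → ¬ J l ≤ V4.Fs := by
    intro l h
    simp only [hJdef, if_pos h]
    by_cases h2 : N l = V4.T <;> simp [h2] <;> decide
  have hJmod : isModel J P := by
    intro R hR
    by_cases hneg : ∃ b ∈ R.neg, M b = V4.T
    · obtain ⟨b, hb, hbT⟩ := hneg
      exact ruleSat_of_bigneg hb (hJT b hbT)
    · push_neg at hneg
      have hnegFs : ∀ b ∈ R.neg, M b ≤ V4.Fs := fun b hb => v4_ne_le _ (hneg b hb) (hsol b)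
      have hJnegFs : ∀ b ∈ R.neg, J b ≤ V4.Fs := fun b hb => by
        simp only [hJdef, if_neg (hneg b hb)]; exact hnegFs b hb
      obtain ⟨l1, c, l2, heq, hfs, hredl, hl2⟩ :=
        xred_decomp M R.pos R.headList (List.cons_ne_nil _ _)
      have hfsJ : ∀ x ∈ l1, J x = V4.Fs := by
        intro x hx
        have h1 := hfs x hx
        have h2 : M x ≠ V4.T := by rw [h1]; exact v4_Fs_ne_T
        simp only [hJdef, if_neg h2]
        exact h1
      have hsat := hmod R hR
      unfold ruleSat at hsat ⊢
      rw [bodyVal_eq_conj hnegFs] at hsat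
      rw [bodyVal_eq_conj hJnegFs]
      unfold Rule.headVal at hsat ⊢
      rw [heq, evalOD_split c l2 hfs] at hsat
      rw [heq, evalOD_split c l2 hfsJ]
      have hconjJM : evalConj J R.pos ≤ evalConj M R.pos := evalConj_mono fun a _ => hJle a
      by_cases hMc : M c = V4.T
      · have hJc : J c = if N c = V4.T then V4.T else V4.Ts := by
          simp only [hJdef, if_pos hMc]
        by_cases hNc : N c = V4.T
        · rw [hJc, if_pos hNc]
          rw [if_neg v4_T_ne_Fs]
          exact v4_le_T _
        · rw [hJc, if_neg hNc]
          rw [if_neg (by decide)]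
          by_contra hcon
          have hconjT : evalConj J R.pos = V4.T := v4_not_le_Ts _ hcon
          have hallT : ∀ a ∈ R.pos, N a = V4.T := by
            intro a ha
            have h1 : V4.T ≤ J a := hconjT ▸ evalConj_le_of_mem J ha
            have h2 : J a = V4.T := le_antisymm (v4_le_T _) h1
            by_cases hMa : M a = V4.T
            · simp only [hJdef, if_pos hMa] at h2
              by_cases hNa : N a = V4.T
              · exact hNa
              · rw [if_neg hNa] at h2; exact absurd h2 (by decide)
            · simp only [hJdef, if_neg hMa] at h2
              exact absurd h2 hMa
          have hconjN : evalConj N R.pos = V4.T :=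
            le_antisymm (v4_le_T _) (le_evalConj fun a ha => le_of_eq (hallT a ha).symm)
          have hmem : (⟨c, R.pos, false⟩ : RedRule α) ∈ xreduct M P :=
            ⟨R, hR, by rw [xredRule_eq hneg, hredl]; simp⟩
          have hc := (redSat_false_iff N c R.pos).1 (hN _ hmem)
          rw [hconjN] at hc
          exact hNc (le_antisymm (v4_le_T _) hc)
      · have hJc : J c = M c := by simp only [hJdef, if_neg hMc]
        rw [hJc]
        by_cases hcFs : M c = V4.Fs
        · rw [if_pos hcFs, hl2 hcFs] at hsat ⊢
          exact le_trans hconjJM hsat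
        · rw [if_neg hcFs] at hsat ⊢
          exact le_trans hconjJM hsat
  have hJprec : interpPreceq J M := by
    intro l
    by_cases h : M l = V4.T
    · rw [h]
      simp only [hJdef, if_pos h]
      by_cases h2 : N l = V4.T
      · rw [if_pos h2]; exact preceq_refl _
      · rw [if_neg h2]; exact preceq_Ts_T
    · simp only [hJdef, if_neg h]; exact preceq_refl _
  have hJM := hmin J hJmod hJprec
  intro l hl
  have h1 : J l = V4.T := by rw [hJM]; exact hl
  simp only [hJdef, if_pos hl] at h1
  by_cases h2 : N l = V4.T
  · exact h2
  · rw [if_neg h2] at h1; exact absurd h1 (by decide)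

lemma step2 {M N : Interp α} {P : Set (Rule α)} (hsol : solid M) (hmod : isModel M P)
    (hmin : ∀ K : Interp α, isModel K P → interpPreceq K M → K = M)
    (hN : redModel N (xreduct M P)) (hT : ∀ l, M l = V4.T → N l = V4.T) :
    interpLE M N := by
  classical
  set K : Interp α := fun l => if M l = V4.Fs ∧ N l = V4.F then V4.F else M l with hKdef
  have hKcases : ∀ l, K l = V4.F ∨ K l = M l := by
    intro l
    by_cases h : M l = V4.Fs ∧ N l = V4.F
    · left; simp only [hKdef, if_pos h]
    · right; simp only [hKdef, if_neg h]
  have hKle : ∀ l, K l ≤ M l := by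
    intro l
    rcases hKcases l with h | h
    · rw [h]; exact v4_F_le _
    · rw [h]
  have hKF : ∀ a, N a = V4.F → K a = V4.F := by
    intro a hNa
    have hMa : M a ≠ V4.T := fun h => by rw [hT a h] at hNa; exact absurd hNa (by decide)
    have hMa' : M a ≤ V4.Fs := v4_ne_le _ hMa (hsol a)
    by_cases h : M a = V4.Fs
    · have hc : M a = V4.Fs ∧ N a = V4.F := ⟨h, hNa⟩
      simp only [hKdef]
      rw [if_pos hc]
    · have : M a = V4.F := v4_le_Fs_ne _ hMa' h
      simp only [hKdef]
      rw [if_neg (fun hc => h hc.1), this]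
  have hKmod : isModel K P := by
    intro R hR
    by_cases hneg : ∃ b ∈ R.neg, M b = V4.T
    · obtain ⟨b, hb, hbT⟩ := hneg
      have : K b = M b := by
        simp only [hKdef]
        rw [if_neg (fun hc => by rw [hc.1] at hbT; exact v4_Fs_ne_T hbT)]
      exact ruleSat_of_bigneg hb (by rw [this, hbT]; decide)
    · push_neg at hneg
      have hnegFs : ∀ b ∈ R.neg, M b ≤ V4.Fs := fun b hb => v4_ne_le _ (hneg b hb) (hsol b)
      have hKnegFs : ∀ b ∈ R.neg, K b ≤ V4.Fs := fun b hb =>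
        le_trans (hKle b) (hnegFs b hb)
      obtain ⟨l1, c, l2, heq, hfs, hredl, hl2⟩ :=
        xred_decomp M R.pos R.headList (List.cons_ne_nil _ _)
      have hsat := hmod R hR
      unfold ruleSat at hsat ⊢
      rw [bodyVal_eq_conj hnegFs] at hsat
      rw [bodyVal_eq_conj hKnegFs]
      unfold Rule.headVal at hsat ⊢
      rw [heq, evalOD_split c l2 hfs] at hsat
      rw [heq]
      have hconjKM : evalConj K R.pos ≤ evalConj M R.pos := evalConj_mono fun a _ => hKle a
      -- helper: from evalConj N R.pos ≤ F we get evalConj K R.pos ≤ target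
      have hfromN : evalConj N R.pos ≤ V4.F → evalConj K R.pos ≤ V4.F := by
        intro hcn
        obtain ⟨a, ha, hle⟩ := exists_le_of_evalConj_le (by decide) hcn
        have hNa : N a = V4.F := v4_le_F _ hle
        calc evalConj K R.pos ≤ K a := evalConj_le_of_mem K ha
        _ = V4.F := hKF a hNa
      by_cases hl1 : ∃ x ∈ l1, K x ≠ V4.Fs
      · obtain ⟨p, x, q, hpq, hp, hx⟩ := exists_split K l1 hl1
        have hxl1 : x ∈ l1 := by rw [hpq]; simp
        have hMx : M x = V4.Fs := hfs x hxl1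
        have hKx : K x = V4.F := by
          rcases hKcases x with h | h
          · exact h
          · rw [h] at hx; exact absurd hMx hx
        have hNx : N x = V4.F := by
          by_contra hc
          have : K x = M x := by simp only [hKdef]; rw [if_neg (fun h => hc h.2)]
          rw [this, hMx] at hKx
          exact absurd hKx (by decide)
        have heq2 : l1 ++ c :: l2 = p ++ x :: (q ++ c :: l2) := by
          rw [hpq]; simp
        rw [heq2, evalOD_split x (q ++ c :: l2) hp, if_neg (by rw [hKx]; decide), hKx]
        -- use the fstar reduct rule for x
        have hmem : (⟨x, R.pos, true⟩ : RedRule α) ∈ xreduct M P := by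
          refine ⟨R, hR, ?_⟩
          rw [xredRule_eq hneg, hredl]
          exact List.mem_append_left _ (List.mem_map.2 ⟨x, hxl1, rfl⟩)
        have hrs := hN _ hmem
        unfold redSat RedRule.bodyVal at hrs
        simp only [if_true] at hrs
        rw [hNx] at hrs
        have hcn : evalConj N R.pos ≤ V4.F := by
          rcases min_le_iff.1 hrs with h | h
          · exact absurd h (by decide)
          · exact h
        exact hfromN hcn
      · push_neg at hl1
        have hKfs : ∀ x ∈ l1, K x = V4.Fs := hl1
        rw [evalOD_split c l2 hKfs]
        by_cases hMc : M c = V4.T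
        · have hKc : K c = V4.T := by
            simp only [hKdef]
            rw [if_neg (fun hc => by rw [hc.1] at hMc; exact v4_Fs_ne_T hMc), hMc]
          rw [hKc, if_neg v4_T_ne_Fs]
          exact v4_le_T _
        · by_cases hMcFs : M c = V4.Fs
          · rw [if_pos hMcFs, hl2 hMcFs, List.map_nil, evalOD_nil] at hsat
            by_cases hKc : K c = V4.Fs
            · rw [if_pos hKc, hl2 hMcFs, List.map_nil, evalOD_nil]
              exact le_trans hconjKM hsat
            · rw [if_neg hKc]
              have hKcF : K c = V4.F := by
                rcases hKcases c with h | h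
                · exact h
                · rw [h] at hKc; exact absurd hMcFs hKc
              have hNc : N c = V4.F := by
                by_contra hc
                have : K c = M c := by simp only [hKdef]; rw [if_neg (fun h => hc h.2)]
                rw [this, hMcFs] at hKcF
                exact absurd hKcF (by decide)
              rw [hKcF]
              have hmem : (⟨c, R.pos, false⟩ : RedRule α) ∈ xreduct M P :=
                ⟨R, hR, by rw [xredRule_eq hneg, hredl]; simp⟩
              have hc2 := (redSat_false_iff N c R.pos).1 (hN _ hmem)
              rw [hNc] at hc2
              exact hfromN hc2
          · have hMcF : M c = V4.F := v4_le_Fs_ne _ (v4_ne_le _ hMc (hsol c)) hMcFs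
            have hKc : K c = V4.F := by
              rcases hKcases c with h | h
              · exact h
              · rw [h, hMcF]
            rw [hKc, if_neg (by decide)]
            rw [if_neg hMcFs, hMcF] at hsat
            exact le_trans hconjKM hsat
  have hKprec : interpPreceq K M := by
    intro l
    by_cases h : M l = V4.Fs ∧ N l = V4.F
    · simp only [hKdef, if_pos h]
      rw [h.1]
      exact preceq_F _
    · simp only [hKdef, if_neg h]; exact preceq_refl _
  have hKM := hmin K hKmod hKprec
  intro l
  by_cases hMl : M l = V4.T
  · rw [hMl, hT l hMl]
  · by_cases hMlFs : M l = V4.Fs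
    · have : ¬ (M l = V4.Fs ∧ N l = V4.F) := by
        intro hc
        have h1 : K l = V4.F := by simp only [hKdef, if_pos hc]
        rw [hKM] at h1
        rw [h1] at hMlFs
        exact absurd hMlFs (by decide)
      have hNl : N l ≠ V4.F := fun h => this ⟨hMlFs, h⟩
      rw [hMlFs]
      exact v4_ne_F _ hNl
    · rw [v4_le_Fs_ne _ (v4_ne_le _ hMl (hsol l)) hMlFs]
      exact v4_F_le _

end Aux3
section Aux4
variable {α : Type}

lemma v4_le_Fs_ne_Ts (a : V4) : a ≤ V4.Fs → a ≠ V4.Ts := by revert a; decide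
lemma v4_ne3 (a : V4) : a ≠ V4.Fs → a ≠ V4.Ts → a ≠ V4.T → a = V4.F := by revert a; decide

lemma eq_of_model_preceq {M N : Interp α} {P : Set (Rule α)} (hsol : solid M)
    (hleast : ∀ K : Interp α, solid K → redModel K (xreduct M P) → interpLE M K)
    (hNmod : isModel N P) (hNprec : interpPreceq N M) : N = M := by
  classical
  have hNle : ∀ l, N l ≤ M l := fun l => preceq_le _ _ (hNprec l)
  set N' : Interp α := fun l => if N l = V4.Ts then V4.T else N l with hN'def
  have hN'sol : solid N' := by
    intro l
    by_cases h : N l = V4.Ts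
    · simp only [hN'def, if_pos h]; decide
    · simp only [hN'def, if_neg h]; exact h
  have hN'eq : ∀ l, N l ≤ V4.Fs → N' l = N l := by
    intro l h
    simp only [hN'def, if_neg (v4_le_Fs_ne_Ts _ h)]
  have hN'le : ∀ l, N' l ≤ M l := by
    intro l
    by_cases h : N l = V4.Ts
    · have : M l = V4.T := preceq_Ts _ _ (hNprec l) h (hsol l)
      simp only [hN'def, if_pos h, this]
      exact le_refl _
    · simp only [hN'def, if_neg h]; exact hNle l
  have hN'red : redModel N' (xreduct M P) := by
    rintro r ⟨R, hR, hrR⟩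
    by_cases hneg : ∃ b ∈ R.neg, M b = V4.T
    · unfold xredRule at hrR
      rw [if_pos hneg] at hrR
      simp at hrR
    · push_neg at hneg
      have hnegFs : ∀ b ∈ R.neg, M b ≤ V4.Fs := fun b hb => v4_ne_le _ (hneg b hb) (hsol b)
      have hNnegFs : ∀ b ∈ R.neg, N b ≤ V4.Fs := fun b hb => le_trans (hNle b) (hnegFs b hb)
      obtain ⟨l1, c, l2, heq, hfs, hredl, hl2⟩ :=
        xred_decomp M R.pos R.headList (List.cons_ne_nil _ _)
      rw [xredRule_eq hneg, hredl] at hrR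
      have hsat := hNmod R hR
      unfold ruleSat at hsat
      rw [bodyVal_eq_conj hNnegFs] at hsat
      unfold Rule.headVal at hsat
      rw [heq] at hsat
      by_cases hl1 : ∃ x ∈ l1, N x ≠ V4.Fs
      · obtain ⟨p, x, q, hpq, hp, hx⟩ := exists_split N l1 hl1
        have hxl1 : x ∈ l1 := by rw [hpq]; simp
        have hNx : N x = V4.F := by
          refine v4_le_Fs_ne _ ?_ hx
          calc N x ≤ M x := hNle x
          _ = V4.Fs := hfs x hxl1
        have heq2 : l1 ++ c :: l2 = p ++ x :: (q ++ c :: l2) := by rw [hpq]; simp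
        rw [heq2, evalOD_split x (q ++ c :: l2) hp, if_neg (by rw [hNx]; decide), hNx] at hsat
        obtain ⟨a, ha, hle⟩ := exists_le_of_evalConj_le (by decide) hsat
        have hNa : N a = V4.F := v4_le_F _ hle
        have hconj' : evalConj N' R.pos ≤ V4.F := by
          calc evalConj N' R.pos ≤ N' a := evalConj_le_of_mem N' ha
          _ = V4.F := by rw [hN'eq a (by rw [hNa]; decide), hNa]
        rcases List.mem_append.1 hrR with h | h
        · obtain ⟨x', hx', rfl⟩ := List.mem_map.1 h
          exact redSat_of_conj_le (le_trans hconj' (v4_F_le _))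
        · rw [List.mem_singleton.1 h]
          exact redSat_of_conj_le (le_trans hconj' (v4_F_le _))
      · push_neg at hl1
        have hN'fs : ∀ x ∈ l1, N' x = V4.Fs := fun x hx => by
          rw [hN'eq x (le_of_eq (hl1 x hx))]; exact hl1 x hx
        rw [evalOD_split c l2 hl1] at hsat
        rcases List.mem_append.1 hrR with h | h
        · obtain ⟨x', hx', rfl⟩ := List.mem_map.1 h
          exact redSat_true_of (le_of_eq (hN'fs x' hx').symm)
        · rw [List.mem_singleton.1 h, redSat_false_iff]
          by_cases hNc : N c = V4.Fs
          · have hMc : M c = V4.Fs := preceq_Fs _ _ (hNprec c) hNc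
            rw [if_pos hNc, hl2 hMc, List.map_nil, evalOD_nil] at hsat
            obtain ⟨a, ha, hle⟩ := exists_le_of_evalConj_le (by decide) hsat
            have h2 : N' c = V4.Fs := by rw [hN'eq c (le_of_eq hNc)]; exact hNc
            rw [h2]
            calc evalConj N' R.pos ≤ N' a := evalConj_le_of_mem N' ha
            _ = N a := hN'eq a hle
            _ ≤ V4.Fs := hle
          · rw [if_neg hNc] at hsat
            by_cases hNcT : N c = V4.T
            · have hne : N c ≠ V4.Ts := by rw [hNcT]; decide
              have : N' c = V4.T := by simp only [hN'def, if_neg hne]; exact hNcT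
              rw [this]; exact v4_le_T _
            · by_cases hNcTs : N c = V4.Ts
              · have : N' c = V4.T := by simp only [hN'def, if_pos hNcTs]
                rw [this]; exact v4_le_T _
              · have hNcF : N c = V4.F := v4_ne3 _ hNc hNcTs hNcT
                rw [hNcF] at hsat
                obtain ⟨a, ha, hle⟩ := exists_le_of_evalConj_le (by decide) hsat
                have hNa : N a = V4.F := v4_le_F _ hle
                have : N' c = V4.F := by rw [hN'eq c (by rw [hNcF]; decide), hNcF]
                rw [this]
                calc evalConj N' R.pos ≤ N' a := evalConj_le_of_mem N' ha
                _ = V4.F := by rw [hN'eq a (by rw [hNa]; decide), hNa]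
  have hMeq : ∀ l, M l = N' l := fun l => le_antisymm (hleast N' hN'sol hN'red l) (hN'le l)
  have hMT : ∀ l, N l = V4.Ts → M l = V4.T := by
    intro l h
    rw [hMeq l]
    simp only [hN'def, if_pos h]
  have hMeqN : ∀ l, N l ≠ V4.Ts → M l = N l := by
    intro l h
    rw [hMeq l]
    simp only [hN'def, if_neg h]
  have hnoTs : ∀ l, N l ≠ V4.Ts := by
    by_contra hcon
    push_neg at hcon
    obtain ⟨l0, hl0⟩ := hcon
    set N'' : Interp α := fun l => if N l = V4.Ts then V4.Fs else N l with hN''def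
    have hN''sol : solid N'' := by
      intro l
      by_cases h : N l = V4.Ts
      · simp only [hN''def, if_pos h]; decide
      · simp only [hN''def, if_neg h]; exact h
    have hN''eq : ∀ l, N l ≠ V4.Ts → N'' l = N l := by
      intro l h
      simp only [hN''def, if_neg h]
    have hN''leFs : ∀ l, N l ≤ V4.Ts → N'' l ≤ V4.Fs := by
      intro l h
      by_cases h2 : N l = V4.Ts
      · simp only [hN''def, if_pos h2]; exact le_refl _
      · rw [hN''eq l h2]; exact v4_le_Ts_ne _ h h2
    have hN''red : redModel N'' (xreduct M P) := by
      rintro r ⟨R, hR, hrR⟩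
      by_cases hneg : ∃ b ∈ R.neg, M b = V4.T
      · unfold xredRule at hrR
        rw [if_pos hneg] at hrR
        simp at hrR
      · push_neg at hneg
        have hnegFs : ∀ b ∈ R.neg, M b ≤ V4.Fs := fun b hb => v4_ne_le _ (hneg b hb) (hsol b)
        have hNnegFs : ∀ b ∈ R.neg, N b ≤ V4.Fs := fun b hb => le_trans (hNle b) (hnegFs b hb)
        obtain ⟨l1, c, l2, heq, hfs, hredl, hl2⟩ :=
          xred_decomp M R.pos R.headList (List.cons_ne_nil _ _)
        rw [xredRule_eq hneg, hredl] at hrR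
        have hsat := hNmod R hR
        unfold ruleSat at hsat
        rw [bodyVal_eq_conj hNnegFs] at hsat
        unfold Rule.headVal at hsat
        rw [heq] at hsat
        have hl1N : ∀ x ∈ l1, N x = V4.Fs := by
          intro x hx
          have hMx : M x = V4.Fs := hfs x hx
          have hxTs : N x ≠ V4.Ts := fun h => by rw [hMT x h] at hMx; exact v4_T_ne_Fs hMx
          rw [← hMeqN x hxTs]
          exact hMx
        have hN''fs : ∀ x ∈ l1, N'' x = V4.Fs := fun x hx => by
          rw [hN''eq x (by rw [hl1N x hx]; decide)]; exact hl1N x hx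
        rw [evalOD_split c l2 hl1N] at hsat
        rcases List.mem_append.1 hrR with h | h
        · obtain ⟨x', hx', rfl⟩ := List.mem_map.1 h
          exact redSat_true_of (le_of_eq (hN''fs x' hx').symm)
        · rw [List.mem_singleton.1 h, redSat_false_iff]
          by_cases hNcTs : N c = V4.Ts
          · have hN''c : N'' c = V4.Fs := by simp only [hN''def, if_pos hNcTs]
            rw [if_neg (by rw [hNcTs]; decide), hNcTs] at hsat
            obtain ⟨a, ha, hle⟩ := exists_le_of_evalConj_le (by decide) hsat
            rw [hN''c]
            calc evalConj N'' R.pos ≤ N'' a := evalConj_le_of_mem N'' ha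
            _ ≤ V4.Fs := hN''leFs a hle
          · rw [hN''eq c hNcTs]
            by_cases hNcFs : N c = V4.Fs
            · have hMc : M c = V4.Fs := by rw [hMeqN c hNcTs]; exact hNcFs
              rw [if_pos hNcFs, hl2 hMc, List.map_nil, evalOD_nil] at hsat
              obtain ⟨a, ha, hle⟩ := exists_le_of_evalConj_le (by decide) hsat
              rw [hNcFs]
              calc evalConj N'' R.pos ≤ N'' a := evalConj_le_of_mem N'' ha
              _ ≤ V4.Fs := hN''leFs a (le_trans hle (by decide))
            · rw [if_neg hNcFs] at hsat
              by_cases hNcT : N c = V4.T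
              · rw [hNcT]; exact v4_le_T _
              · have hNcF : N c = V4.F := v4_ne3 _ hNcFs hNcTs hNcT
                rw [hNcF] at hsat ⊢
                obtain ⟨a, ha, hle⟩ := exists_le_of_evalConj_le (by decide) hsat
                have hNa : N a = V4.F := v4_le_F _ hle
                calc evalConj N'' R.pos ≤ N'' a := evalConj_le_of_mem N'' ha
                _ = V4.F := by rw [hN''eq a (by rw [hNa]; decide), hNa]
    have hMle'' := hleast N'' hN''sol hN''red l0
    rw [hMT l0 hl0] at hMle''
    simp only [hN''def, if_pos hl0] at hMle''
    exact absurd hMle'' (by decide)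
  funext l
  have := hMeq l
  simp only [hN'def, if_neg (hnoTs l)] at this
  exact this.symm

end Aux4

/-- A four-valued interpretation is a three-valued answer set of
an LPOD `P` iff it is a consistent, solid, `⪯`-minimal four-valued model of `P`. -/
theorem threeAnswerSet_iff_preceq_minimal_solid {α : Type} (P : Set (Rule α))
    (M : Interp α) :
    threeAnswerSet P M ↔
      (consistentI M ∧ solid M ∧ isModel M P ∧
        ∀ N : Interp α, isModel N P → interpPreceq N M → N = M) := by
  constructor
  · rintro ⟨hsol, hcons, hred, hleast⟩
    exact ⟨hcons, hsol, isModel_of_redModel hsol hred,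
      fun N hNmod hNprec => eq_of_model_preceq hsol hleast hNmod hNprec⟩
  · rintro ⟨hcons, hsol, hmod, hmin⟩
    refine ⟨hsol, hcons, redModel_of_isModel hsol hmod, ?_⟩
    intro N _ hNred
    exact step2 hsol hmod hmin hNred (step1 hsol hmod hmin hNred)
end

section
/- Let P be an LPOD and let M1, M2 be three-valued answer sets of P such that collapse(M1) = collapse(M2). Then M1 = M2. -/
variable {α : Type}

section Aux

variable {α : Type}

lemma evalConj_min (M1 M2 : Interp α) (L : List (Lit α)) :
    evalConj (fun l => min (M1 l) (M2 l)) L = min (evalConj M1 L) (evalConj M2 L) := by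
  induction L with
  | nil => simp [evalConj]
  | cons a L ih =>
    rw [evalConj_cons, evalConj_cons, evalConj_cons, ih]
    generalize M1 a = x; generalize M2 a = y
    generalize evalConj M1 L = u; generalize evalConj M2 L = v
    revert x y u v; decide

lemma xredHead_mem {I : Interp α} {body heads : List (Lit α)} {r : RedRule α}
    (hr : r ∈ xredHead I body heads) :
    r.pos = body ∧ ∃ l1 l2, heads = l1 ++ r.head :: l2 ∧ ∀ d ∈ l1, I d = V4.Fs := by
  induction heads with
  | nil => simp [xredHead] at hr
  | cons c rest ih =>
    cases rest with
    | nil =>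
      simp [xredHead] at hr
      subst hr
      exact ⟨rfl, [], [], rfl, by simp⟩
    | cons c' rest' =>
      by_cases hc : I c = V4.Fs
      · simp only [xredHead, if_pos hc, List.mem_cons] at hr
        rcases hr with rfl | hr
        · exact ⟨rfl, [], c' :: rest', rfl, by simp⟩
        · obtain ⟨hp, l1, l2, hs, hl1⟩ := ih hr
          refine ⟨hp, c :: l1, l2, by simp [hs], ?_⟩
          rintro d hd
          rcases List.mem_cons.mp hd with rfl | hd
          · exact hc
          · exact hl1 d hd
      · simp only [xredHead, if_neg hc, List.mem_singleton] at hr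
        subst hr
        exact ⟨rfl, [], c' :: rest', rfl, by simp⟩

lemma xredHead_mem_of_prefix (I : Interp α) (body : List (Lit α))
    (l1 l2 : List (Lit α)) (d : Lit α) (h1 : ∀ e ∈ l1, I e = V4.Fs)
    (hd : I d ≠ V4.Fs) :
    (⟨d, body, false⟩ : RedRule α) ∈ xredHead I body (l1 ++ d :: l2) := by
  induction l1 with
  | nil =>
    cases l2 with
    | nil => simp [xredHead]
    | cons x xs => simp [xredHead, if_neg hd]
  | cons e l1' ih =>
    have he : I e = V4.Fs := h1 e (by simp)
    have ih' := ih (fun x hx => h1 x (List.mem_cons_of_mem _ hx))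
    rcases hl : l1' ++ d :: l2 with _ | ⟨x, xs⟩
    · simp at hl
    · show _ ∈ xredHead I body (e :: (l1' ++ d :: l2))
      rw [hl]
      simp only [xredHead, if_pos he, List.mem_cons]
      right
      rw [← hl]
      exact ih'

lemma first_F (I : Interp α) (L : List (Lit α))
    (hall : ∀ e ∈ L, I e = V4.F ∨ I e = V4.Fs)
    (hex : ∃ d ∈ L, I d = V4.F) :
    ∃ p d q, L = p ++ d :: q ∧ I d = V4.F ∧ ∀ e ∈ p, I e = V4.Fs := by
  induction L with
  | nil => simp at hex
  | cons a L ih =>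
    by_cases ha : I a = V4.F
    · exact ⟨[], a, L, rfl, ha, by simp⟩
    · have ha' : I a = V4.Fs := (hall a (by simp)).resolve_left ha
      obtain ⟨d, hd, hdF⟩ := hex
      have hd' : d ∈ L := by
        rcases List.mem_cons.mp hd with rfl | hd
        · exact absurd hdF ha
        · exact hd
      obtain ⟨p, d', q, hL, hF, hp⟩ :=
        ih (fun e he => hall e (List.mem_cons_of_mem _ he)) ⟨d, hd', hdF⟩
      refine ⟨a :: p, d', q, by simp [hL], hF, ?_⟩
      rintro e he
      rcases List.mem_cons.mp he with rfl | he
      · exact ha'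
      · exact hp e he

lemma le_of_collapse (P : Set (Rule α)) (M1 M2 : Interp α)
    (h1 : threeAnswerSet P M1) (h2 : threeAnswerSet P M2)
    (h : collapse M1 = collapse M2) : interpLE M1 M2 := by
  obtain ⟨s1, _c1, m1, least1⟩ := h1
  obtain ⟨s2, _c2, m2, _least2⟩ := h2
  have hT : ∀ l, M1 l = V4.T ↔ M2 l = V4.T := fun l => Set.ext_iff.mp h l
  set N : Interp α := fun l => min (M1 l) (M2 l) with hN
  have sN : solid N := by
    intro l hl
    rcases min_cases (M1 l) (M2 l) with ⟨he, _⟩ | ⟨he, _⟩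
    · exact s1 l (by rw [← he]; exact hl)
    · exact s2 l (by rw [← he]; exact hl)
  have mN : redModel N (xreduct M1 P) := by
    rintro r ⟨R, hRP, hrR⟩
    have hneg : ¬ ∃ b ∈ R.neg, M1 b = V4.T := by
      intro hb
      rw [xredRule, if_pos hb] at hrR
      simp at hrR
    have hneg2 : ¬ ∃ b ∈ R.neg, M2 b = V4.T := by
      intro ⟨b, hb, hbT⟩
      exact hneg ⟨b, hb, (hT b).mpr hbT⟩
    rw [xredRule, if_neg hneg] at hrR
    obtain ⟨hpos, l1, l2, hsplit, hl1⟩ := xredHead_mem hrR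
    have sat1 : r.bodyVal M1 ≤ M1 r.head :=
      m1 r ⟨R, hRP, by rw [xredRule, if_neg hneg]; exact hrR⟩
    have hbodyN : r.bodyVal N = min (r.bodyVal M1) (r.bodyVal M2) := by
      unfold RedRule.bodyVal
      rw [evalConj_min]
      generalize (if r.fstar then V4.Fs else V4.T) = f
      generalize evalConj M1 r.pos = u; generalize evalConj M2 r.pos = v
      revert f u v; decide
    have key2 : min (r.bodyVal M1) (r.bodyVal M2) ≤ M2 r.head := by
      by_contra hcon
      push_neg at hcon
      have hhead2 : M2 r.head = V4.F ∨ M2 r.head = V4.Fs := by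
        have hs := s2 r.head
        cases hh : M2 r.head with
        | F => left; rfl
        | Fs => right; rfl
        | Ts => exact absurd hh hs
        | T =>
          rw [hh] at hcon
          exact absurd hcon (by
            generalize r.bodyVal M1 = u; generalize r.bodyVal M2 = v
            revert u v; decide)
      rcases hhead2 with hh | hh
      · -- M2 r.head = F
        rw [hh] at hcon
        have hb2 : V4.Fs ≤ r.bodyVal M2 := by
          have := lt_of_lt_of_le hcon (min_le_right _ _)
          revert this
          generalize r.bodyVal M2 = v; revert v; decide
        have he2 : V4.Fs ≤ evalConj M2 r.pos := by
          have := le_trans hb2 (min_le_right _ _ : r.bodyVal M2 ≤ evalConj M2 r.pos)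
          exact this
        have hb1 : V4.F < r.bodyVal M1 := lt_of_lt_of_le hcon (min_le_left _ _)
        have hM1h : M1 r.head = V4.Fs := by
          have hge : V4.F < M1 r.head := lt_of_lt_of_le hb1 sat1
          have hnT : M1 r.head ≠ V4.T := fun ht => by
            have := (hT r.head).mp ht; rw [this] at hh; exact absurd hh (by decide)
          have hs := s1 r.head
          cases hm : M1 r.head with
          | F => rw [hm] at hge; exact absurd hge (by decide)
          | Fs => rfl
          | Ts => exact absurd hm hs
          | T => exact absurd hm hnT
        -- all of l1 ++ [r.head] have M1 value Fs
        have hallFs : ∀ e ∈ l1 ++ [r.head], M1 e = V4.Fs := by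
          intro e he
          rcases List.mem_append.mp he with he | he
          · exact hl1 e he
          · rw [List.mem_singleton.mp he]; exact hM1h
        have hall2 : ∀ e ∈ l1 ++ [r.head], M2 e = V4.F ∨ M2 e = V4.Fs := by
          intro e he
          have hnT : M2 e ≠ V4.T := fun ht => by
            have h2e := (hT e).mpr ht
            rw [hallFs e he] at h2e
            exact absurd h2e (by decide)
          have hs := s2 e
          cases hm : M2 e with
          | F => left; rfl
          | Fs => right; rfl
          | Ts => exact absurd hm hs
          | T => exact absurd hm hnT
        obtain ⟨p, d, q, hLsplit, hdF, hp⟩ := first_F M2 (l1 ++ [r.head]) hall2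
          ⟨r.head, by simp, hh⟩
        have hheads : R.headList = p ++ d :: (q ++ l2) := by
          have : R.headList = (l1 ++ [r.head]) ++ l2 := by simp [hsplit]
          rw [this, hLsplit]; simp
        have hmem : (⟨d, R.pos, false⟩ : RedRule α) ∈ xredHead M2 R.pos R.headList := by
          rw [hheads]
          exact xredHead_mem_of_prefix M2 R.pos p (q ++ l2) d hp (by rw [hdF]; decide)
        have hsat2 : (⟨d, R.pos, false⟩ : RedRule α).bodyVal M2 ≤ M2 d :=
          m2 _ ⟨R, hRP, by rw [xredRule, if_neg hneg2]; exact hmem⟩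
        rw [hdF] at hsat2
        have : (⟨d, R.pos, false⟩ : RedRule α).bodyVal M2 = evalConj M2 R.pos := by
          unfold RedRule.bodyVal
          simp only [if_neg (Bool.false_ne_true)]
          generalize evalConj M2 R.pos = u; revert u; decide
        rw [this, ← hpos] at hsat2
        have : V4.Fs ≤ V4.F := le_trans he2 hsat2
        exact absurd this (by decide)
      · -- M2 r.head = Fs
        rw [hh] at hcon
        have hb1 : V4.Fs < r.bodyVal M1 := lt_of_lt_of_le hcon (min_le_left _ _)
        have hM1T : M1 r.head = V4.T := by
          have hge : V4.Fs < M1 r.head := lt_of_lt_of_le hb1 sat1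
          have hs := s1 r.head
          cases hm : M1 r.head with
          | F => rw [hm] at hge; exact absurd hge (by decide)
          | Fs => rw [hm] at hge; exact absurd hge (by decide)
          | Ts => exact absurd hm hs
          | T => rfl
        have := (hT r.head).mp hM1T
        rw [this] at hh
        exact absurd hh (by decide)
    show r.bodyVal N ≤ N r.head
    rw [hbodyN]
    exact le_min (le_trans (min_le_left _ _) sat1) key2
  have hle := least1 N sN mN
  intro l
  exact le_trans (hle l) (min_le_right _ _)

end Aux

/-- Two three-valued answer sets of an LPOD with the same
collapse are equal. -/
theorem threeAnswerSet_eq_of_collapse_eq {α : Type} (P : Set (Rule α))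
    (M1 M2 : Interp α) (h1 : threeAnswerSet P M1) (h2 : threeAnswerSet P M2)
    (h : collapse M1 = collapse M2) : M1 = M2 := by
  funext l
  exact le_antisymm (le_of_collapse P M1 M2 h1 h2 h l)
    (le_of_collapse P M2 M1 h2 h1 h.symm l)
end
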